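/- Define on ℝ³ × ℝ the Beltrami-type velocity field v with components vₓ = -e^{-t+x} sin(y+z) - e^{-t+z} cos(x+y), v_y = -e^{-t+y} sin(x+z) - e^{-t+x} cos(y+z), v_z = -e^{-t+z} sin(x+y) - e^{-t+y} cos(x+z). Then div v = 0 for all (x,y,z,t). -/

import Mathlib

open Real

/-- The Beltrami velocity field: component `i` at spatial point `(x, y, z)` and time `t`. -/
noncomputable def beltrami (x y z t : ℝ) : Fin 3 → ℝ :=
  ![-exp (-t + x) * sin (y + z) - exp (-t + z) * cos (x + y),
    -exp (-t + y) * sin (x + z) - exp (-t + x) * cos (y + z),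
    -exp (-t + z) * sin (x + y) - exp (-t + y) * cos (x + z)]

lemma hexp (t s : ℝ) : HasDerivAt (fun s : ℝ => exp (-t + s)) (exp (-t + s)) s := by
  simpa using (((hasDerivAt_id s).const_add (-t)).exp)

lemma hcos1 (c s : ℝ) : HasDerivAt (fun s : ℝ => cos (s + c)) (-sin (s + c)) s := by
  simpa using (((hasDerivAt_id s).add_const c).cos)

lemma hcos2 (c s : ℝ) : HasDerivAt (fun s : ℝ => cos (c + s)) (-sin (c + s)) s := by
  simpa using (((hasDerivAt_id s).const_add c).cos)

/-- The Beltrami velocity field is divergence free. -/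
theorem stmt_10 :
    ∀ x y z t : ℝ,
      deriv (fun s => beltrami s y z t 0) x
        + deriv (fun s => beltrami x s z t 1) y
        + deriv (fun s => beltrami x y s t 2) z = 0 := by
  intro x y z t
  have h0 : HasDerivAt (fun s => beltrami s y z t 0)
      (-(exp (-t + x) * sin (y + z)) - exp (-t + z) * -sin (x + y)) x := by
    simp only [beltrami, Matrix.cons_val_zero]
    simpa [neg_mul, sub_neg_eq_add, Pi.neg_def, Pi.sub_def] using ((((hexp t x).mul_const (sin (y+z))).neg).sub ((hcos1 y x).const_mul (exp (-t+z))))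
  have h1 : HasDerivAt (fun s => beltrami x s z t 1)
      (-(exp (-t + y) * sin (x + z)) - exp (-t + x) * -sin (y + z)) y := by
    simp only [beltrami, Matrix.cons_val_one, Matrix.head_cons]
    simpa [neg_mul, sub_neg_eq_add, Pi.neg_def, Pi.sub_def] using ((((hexp t y).mul_const (sin (x+z))).neg).sub ((hcos1 z y).const_mul (exp (-t+x))))
  have h2 : HasDerivAt (fun s => beltrami x y s t 2)
      (-(exp (-t + z) * sin (x + y)) - exp (-t + y) * -sin (x + z)) z := by
    simp only [beltrami]
    norm_num
    simpa [neg_mul, sub_neg_eq_add, Pi.neg_def, Pi.sub_def] using ((((hexp t z).mul_const (sin (x+y))).neg).sub ((hcos2 x z).const_mul (exp (-t+y))))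
  rw [h0.deriv, h1.deriv, h2.deriv]
  ring
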